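/- For pure states ψ ∈ H_B and φ ∈ H_{B̄} of two disjoint sets of qudits, the dimensions satisfy the Cauchy-product relation: dim ΔW_k^{ψ⊗φ} = Σ_{l+m=k} (dim ΔW_l^ψ)(dim ΔW_m^φ), where ΔW_k denotes the orthogonal complement of W_{k−1} inside W_k. Equivalently, the entanglement polynomial is multiplicative: f(ψ⊗φ) = f(ψ)·f(φ). -/

import Mathlib

noncomputable section

open Matrix

/-- An operator on `N` qudits (Hilbert space modeled as functions `(ι → Fin d) → ℂ`)
is *supported on* the set of sites `B` if it has the form `O_B ⊗ I_{B̄}`: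
its matrix elements vanish unless the configurations agree off `B`, and they do not
depend on the (common) configuration off `B`. -/
def SupportedOn {ι : Type*} [DecidableEq ι] (d : ℕ) (B : Finset ι)
    (M : Matrix (ι → Fin d) (ι → Fin d) ℂ) : Prop :=
  (∀ x y : ι → Fin d, (∃ i ∉ B, x i ≠ y i) → M x y = 0) ∧
  (∀ x y z z' : ι → Fin d,
    M (fun i => if i ∈ B then x i else z i) (fun i => if i ∈ B then y i else z i) =
    M (fun i => if i ∈ B then x i else z' i) (fun i => if i ∈ B then y i else z' i))

/-- `V^k`: the span of operators supported on at most `k` sites (the `k`-local operators). -/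
def Vk (ι : Type*) [DecidableEq ι] (d k : ℕ) :
    Submodule ℂ (Matrix (ι → Fin d) (ι → Fin d) ℂ) :=
  Submodule.span ℂ {M | ∃ B : Finset ι, B.card ≤ k ∧ SupportedOn d B M}

/-- `W_k^ψ = Span{Oψ : O ∈ V^k}`. -/
def Wk {ι : Type*} [Fintype ι] [DecidableEq ι] {d : ℕ} (ψ : (ι → Fin d) → ℂ) (k : ℕ) :
    Submodule ℂ ((ι → Fin d) → ℂ) :=
  Submodule.span ℂ {v | ∃ M ∈ Vk ι d k, v = M.mulVec ψ}

/-- `dim W_k^ψ`. -/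
def dimW {ι : Type*} [Fintype ι] [DecidableEq ι] {d : ℕ} (ψ : (ι → Fin d) → ℂ) (k : ℕ) : ℕ :=
  Module.finrank ℂ (Wk ψ k)

/-- `dim ΔW_k^ψ = dim W_k^ψ − dim W_{k−1}^ψ` (with `W_{−1} = 0`), as an integer. -/
def deltaDimW {ι : Type*} [Fintype ι] [DecidableEq ι] {d : ℕ} (ψ : (ι → Fin d) → ℂ)
    (k : ℕ) : ℤ :=
  (dimW ψ k : ℤ) - if k = 0 then 0 else (dimW ψ (k - 1) : ℤ)

/-- The entanglement polynomial `f(ψ) = Σ_k (dim ΔW_k^ψ) x^k ∈ ℤ[x]`. -/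
def entPoly {ι : Type*} [Fintype ι] [DecidableEq ι] {d : ℕ} (ψ : (ι → Fin d) → ℂ) :
    Polynomial ℤ :=
  ∑ k ∈ Finset.range (Fintype.card ι + 1), Polynomial.C (deltaDimW ψ k) * Polynomial.X ^ k

/-- Tensor product of states of two disjoint sets of qudits. -/
def tens {ι₁ ι₂ : Type*} {d : ℕ} (ψ : (ι₁ → Fin d) → ℂ) (φ : (ι₂ → Fin d) → ℂ) :
    (ι₁ ⊕ ι₂ → Fin d) → ℂ :=
  fun x => ψ (fun i => x (Sum.inl i)) * φ (fun j => x (Sum.inr j))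

end

/-! ### Auxiliary development -/

noncomputable section AuxDev

open Matrix Finset

variable {ι ι₁ ι₂ : Type} [Fintype ι] [DecidableEq ι] [Fintype ι₁] [DecidableEq ι₁]
  [Fintype ι₂] [DecidableEq ι₂] {d : ℕ}

/-- `M ↦ M.mulVec ψ` as a linear map in `M`. -/
def mvL (ψ : (ι → Fin d) → ℂ) :
    Matrix (ι → Fin d) (ι → Fin d) ℂ →ₗ[ℂ] ((ι → Fin d) → ℂ) where
  toFun M := M.mulVec ψ
  map_add' A B := Matrix.add_mulVec A B ψ
  map_smul' a A := Matrix.smul_mulVec a A ψ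

lemma Wk_eq_map (ψ : (ι → Fin d) → ℂ) (k : ℕ) :
    Wk ψ k = Submodule.map (mvL ψ) (Vk ι d k) := by
  have h : {v | ∃ M ∈ Vk ι d k, v = M.mulVec ψ} =
      ↑(Submodule.map (mvL ψ) (Vk ι d k)) := by
    ext v
    simp only [Set.mem_setOf_eq, SetLike.mem_coe, Submodule.mem_map]
    constructor
    · rintro ⟨M, hM, rfl⟩; exact ⟨M, hM, rfl⟩
    · rintro ⟨M, hM, rfl⟩; exact ⟨M, hM, rfl⟩
  rw [Wk, h, Submodule.span_eq]

lemma Vk_mono {k k' : ℕ} (h : k ≤ k') : Vk ι d k ≤ Vk ι d k' :=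
  Submodule.span_mono (fun M hM => by
    obtain ⟨B, hB, hs⟩ := hM; exact ⟨B, hB.trans h, hs⟩)

lemma Vk_stab {k : ℕ} (h : Fintype.card ι ≤ k) : Vk ι d k = Vk ι d (Fintype.card ι) := by
  refine le_antisymm (Submodule.span_mono ?_) (Vk_mono h)
  rintro M ⟨B, -, hs⟩
  exact ⟨B, Finset.card_le_univ B, hs⟩

lemma Wk_mono (ψ : (ι → Fin d) → ℂ) : Monotone (Wk ψ) := fun _ _ h => by
  rw [Wk_eq_map, Wk_eq_map]; exact Submodule.map_mono (Vk_mono h)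

lemma Wk_stab (ψ : (ι → Fin d) → ℂ) {k : ℕ} (h : Fintype.card ι ≤ k) :
    Wk ψ k = Wk ψ (Fintype.card ι) := by
  rw [Wk_eq_map, Wk_eq_map, Vk_stab h]

lemma deltaDimW_eq_zero (ψ : (ι → Fin d) → ℂ) {k : ℕ} (h : Fintype.card ι < k) :
    deltaDimW ψ k = 0 := by
  have hk : k ≠ 0 := by omega
  rw [deltaDimW, if_neg hk, dimW, dimW, Wk_stab ψ (le_of_lt h),
    Wk_stab ψ (by omega : Fintype.card ι ≤ k - 1)]
  ring

/-- `tens` as a bilinear map. -/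
def tensL : ((ι₁ → Fin d) → ℂ) →ₗ[ℂ] ((ι₂ → Fin d) → ℂ) →ₗ[ℂ] ((ι₁ ⊕ ι₂ → Fin d) → ℂ) :=
  LinearMap.mk₂ ℂ tens
    (fun u u' w => funext fun x => by simp [tens]; ring)
    (fun a u w => funext fun x => by simp [tens]; ring)
    (fun u w w' => funext fun x => by simp [tens]; ring)
    (fun a u w => funext fun x => by simp [tens]; ring)

@[simp] lemma tensL_apply (u : (ι₁ → Fin d) → ℂ) (w : (ι₂ → Fin d) → ℂ) :
    tensL u w = tens u w := rfl

/-- Kronecker product of operators on the two factors. -/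
def kron (M₁ : Matrix (ι₁ → Fin d) (ι₁ → Fin d) ℂ)
    (M₂ : Matrix (ι₂ → Fin d) (ι₂ → Fin d) ℂ) :
    Matrix (ι₁ ⊕ ι₂ → Fin d) (ι₁ ⊕ ι₂ → Fin d) ℂ :=
  Matrix.of fun x y => M₁ (fun i => x (Sum.inl i)) (fun i => y (Sum.inl i)) *
    M₂ (fun i => x (Sum.inr i)) (fun i => y (Sum.inr i))

lemma kron_mulVec (M₁ : Matrix (ι₁ → Fin d) (ι₁ → Fin d) ℂ)
    (M₂ : Matrix (ι₂ → Fin d) (ι₂ → Fin d) ℂ)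
    (ψ : (ι₁ → Fin d) → ℂ) (φ : (ι₂ → Fin d) → ℂ) :
    (kron M₁ M₂).mulVec (tens ψ φ) = tens (M₁.mulVec ψ) (M₂.mulVec φ) := by
  funext z
  have h1 : tens (M₁.mulVec ψ) (M₂.mulVec φ) z =
      (∑ y₁, M₁ (fun i => z (Sum.inl i)) y₁ * ψ y₁) *
      (∑ y₂, M₂ (fun i => z (Sum.inr i)) y₂ * φ y₂) := rfl
  have h2 : (kron M₁ M₂).mulVec (tens ψ φ) z =
      ∑ y, kron M₁ M₂ z y * tens ψ φ y := rfl
  rw [h1, h2, Finset.sum_mul_sum]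
  rw [← Equiv.sum_comp (Equiv.sumArrowEquivProdArrow ι₁ ι₂ (Fin d)).symm
    (fun y => kron M₁ M₂ z y * tens ψ φ y)]
  rw [Fintype.sum_prod_type]
  refine Finset.sum_congr rfl fun y₁ _ => Finset.sum_congr rfl fun y₂ _ => ?_
  show kron M₁ M₂ z (Sum.elim y₁ y₂) * tens ψ φ (Sum.elim y₁ y₂) = _
  simp only [kron, tens, Matrix.of_apply, Sum.elim_inl, Sum.elim_inr]
  ring

lemma kron_supported {B₁ : Finset ι₁} {B₂ : Finset ι₂}
    {M₁ : Matrix (ι₁ → Fin d) (ι₁ → Fin d) ℂ} {M₂ : Matrix (ι₂ → Fin d) (ι₂ → Fin d) ℂ}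
    (h₁ : SupportedOn d B₁ M₁) (h₂ : SupportedOn d B₂ M₂) :
    SupportedOn d (B₁.disjSum B₂) (kron M₁ M₂) := by
  constructor
  · rintro x y ⟨i, hi, hxy⟩
    cases i with
    | inl i =>
      have h0 : M₁ (fun j => x (Sum.inl j)) (fun j => y (Sum.inl j)) = 0 :=
        h₁.1 _ _ ⟨i, by simpa using hi, hxy⟩
      simp [kron, h0]
    | inr i =>
      have h0 : M₂ (fun j => x (Sum.inr j)) (fun j => y (Sum.inr j)) = 0 :=
        h₂.1 _ _ ⟨i, by simpa using hi, hxy⟩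
      simp [kron, h0]
  · intro x y z z'
    have e₁ : ∀ (u v : ι₁ ⊕ ι₂ → Fin d),
        (fun j => (fun i => if i ∈ B₁.disjSum B₂ then u i else v i) (Sum.inl j)) =
        (fun j => if j ∈ B₁ then (fun i => u (Sum.inl i)) j else (fun i => v (Sum.inl i)) j) := by
      intro u v; funext j; simp [Finset.inl_mem_disjSum]
    have e₂ : ∀ (u v : ι₁ ⊕ ι₂ → Fin d),
        (fun j => (fun i => if i ∈ B₁.disjSum B₂ then u i else v i) (Sum.inr j)) =
        (fun j => if j ∈ B₂ then (fun i => u (Sum.inr i)) j else (fun i => v (Sum.inr i)) j) := by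
      intro u v; funext j; simp [Finset.inr_mem_disjSum]
    show M₁ _ _ * M₂ _ _ = M₁ _ _ * M₂ _ _
    rw [e₁ x z, e₁ y z, e₁ x z', e₁ y z', e₂ x z, e₂ y z, e₂ x z', e₂ y z',
      h₁.2 (fun i => x (Sum.inl i)) (fun i => y (Sum.inl i)) (fun i => z (Sum.inl i))
        (fun i => z' (Sum.inl i)),
      h₂.2 (fun i => x (Sum.inr i)) (fun i => y (Sum.inr i)) (fun i => z (Sum.inr i))
        (fun i => z' (Sum.inr i))]

/-- `kron` as a bilinear map. -/
def kronL : Matrix (ι₁ → Fin d) (ι₁ → Fin d) ℂ →ₗ[ℂ]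
    Matrix (ι₂ → Fin d) (ι₂ → Fin d) ℂ →ₗ[ℂ]
    Matrix (ι₁ ⊕ ι₂ → Fin d) (ι₁ ⊕ ι₂ → Fin d) ℂ :=
  LinearMap.mk₂ ℂ kron
    (fun u u' w => by ext x y; simp [kron, Matrix.add_apply]; ring)
    (fun a u w => by ext x y; simp [kron, Matrix.smul_apply, smul_eq_mul]; ring)
    (fun u w w' => by ext x y; simp [kron, Matrix.add_apply]; ring)
    (fun a u w => by ext x y; simp [kron, Matrix.smul_apply, smul_eq_mul]; ring)

lemma kron_mem_Vk {l m : ℕ} {M₁ : Matrix (ι₁ → Fin d) (ι₁ → Fin d) ℂ}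
    {M₂ : Matrix (ι₂ → Fin d) (ι₂ → Fin d) ℂ}
    (h₁ : M₁ ∈ Vk ι₁ d l) (h₂ : M₂ ∈ Vk ι₂ d m) :
    kron M₁ M₂ ∈ Vk (ι₁ ⊕ ι₂) d (l + m) := by
  have hle : Submodule.map₂ kronL (Vk ι₁ d l) (Vk ι₂ d m) ≤ Vk (ι₁ ⊕ ι₂) d (l + m) := by
    rw [Vk, Vk, Submodule.map₂_span_span]
    refine Submodule.span_le.2 ?_
    rintro _ ⟨M₁', ⟨Ba, hBa, hsa⟩, M₂', ⟨Bb, hBb, hsb⟩, rfl⟩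
    refine Submodule.subset_span ⟨Ba.disjSum Bb, ?_, kron_supported hsa hsb⟩
    rw [Finset.card_disjSum]; exact Nat.add_le_add hBa hBb
  exact hle (Submodule.apply_mem_map₂ kronL h₁ h₂)

/-- Elementary matrix supported on `B`. -/
def Emat (B : Finset ι) (a b : ι → Fin d) : Matrix (ι → Fin d) (ι → Fin d) ℂ :=
  Matrix.of fun x y =>
    if (∀ i ∈ B, x i = a i ∧ y i = b i) ∧ ∀ i ∉ B, x i = y i then 1 else 0

lemma Emat_supported (B : Finset ι) (a b : ι → Fin d) : SupportedOn d B (Emat B a b) := by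
  constructor
  · rintro x y ⟨i, hi, hxy⟩
    exact if_neg fun h => hxy (h.2 i hi)
  · intro x y z z'
    have key : ∀ v : ι → Fin d,
        Emat B a b (fun i => if i ∈ B then x i else v i) (fun i => if i ∈ B then y i else v i) =
        if (∀ i ∈ B, x i = a i ∧ y i = b i) then 1 else 0 := by
      intro v
      show (if _ then (1:ℂ) else 0) = _
      congr 1
      apply propext
      constructor
      · rintro ⟨h1, -⟩ i hi
        have := h1 i hi
        simpa [hi] using this
      · intro h1
        refine ⟨fun i hi => by simpa [hi] using h1 i hi,
          fun i hi => by simp [hi]⟩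
    rw [key z, key z']

lemma kron_Emat (B : Finset (ι₁ ⊕ ι₂)) (a b : ι₁ ⊕ ι₂ → Fin d) :
    kron (Emat B.toLeft (fun i => a (Sum.inl i)) (fun i => b (Sum.inl i)))
      (Emat B.toRight (fun i => a (Sum.inr i)) (fun i => b (Sum.inr i))) = Emat B a b := by
  ext x y
  show (if _ then (1:ℂ) else 0) * (if _ then (1:ℂ) else 0) = (if _ then (1:ℂ) else 0)
  rw [ite_zero_mul_ite_zero, one_mul]
  congr 1
  apply propext
  constructor
  · rintro ⟨⟨hL1, hL2⟩, hR1, hR2⟩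
    constructor
    · intro i hi
      cases i with
      | inl i => exact hL1 i (Finset.mem_toLeft.2 hi)
      | inr i => exact hR1 i (Finset.mem_toRight.2 hi)
    · intro i hi
      cases i with
      | inl i => exact hL2 i (fun h => hi (Finset.mem_toLeft.1 h))
      | inr i => exact hR2 i (fun h => hi (Finset.mem_toRight.1 h))
  · rintro ⟨h1, h2⟩
    exact ⟨⟨fun i hi => h1 _ (Finset.mem_toLeft.1 hi),
        fun i hi => h2 _ (fun h => hi (Finset.mem_toLeft.2 h))⟩,
      ⟨fun i hi => h1 _ (Finset.mem_toRight.1 hi),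
        fun i hi => h2 _ (fun h => hi (Finset.mem_toRight.2 h))⟩⟩

/-- Decomposition of an operator supported on `B` into elementary matrices. -/
lemma supported_decomp (B : Finset ι) (M : Matrix (ι → Fin d) (ι → Fin d) ℂ)
    (hM : SupportedOn d B M) (z₀ : ι → Fin d) :
    M = ∑ a ∈ Finset.univ.filter (fun a : ι → Fin d => ∀ i ∉ B, a i = z₀ i),
        ∑ b ∈ Finset.univ.filter (fun b : ι → Fin d => ∀ i ∉ B, b i = z₀ i),
          M a b • Emat B a b := by
  classical
  ext x y
  rw [Matrix.sum_apply]
  simp_rw [Matrix.sum_apply, Matrix.smul_apply, smul_eq_mul]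
  by_cases hxy : ∀ i ∉ B, x i = y i
  · set a' : ι → Fin d := fun i => if i ∈ B then x i else z₀ i with ha'
    set b' : ι → Fin d := fun i => if i ∈ B then y i else z₀ i with hb'
    have ha'R : a' ∈ Finset.univ.filter (fun a : ι → Fin d => ∀ i ∉ B, a i = z₀ i) := by
      simp only [Finset.mem_filter, Finset.mem_univ, true_and]
      intro i hi; rw [ha']; simp [if_neg hi]
    have hb'R : b' ∈ Finset.univ.filter (fun b : ι → Fin d => ∀ i ∉ B, b i = z₀ i) := by
      simp only [Finset.mem_filter, Finset.mem_univ, true_and]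
      intro i hi; rw [hb']; simp [if_neg hi]
    rw [Finset.sum_eq_single_of_mem a' ha'R ?_]
    · rw [Finset.sum_eq_single_of_mem b' hb'R ?_]
      · have hcond : ((∀ i ∈ B, x i = a' i ∧ y i = b' i) ∧ ∀ i ∉ B, x i = y i) := by
          refine ⟨fun i hi => ?_, hxy⟩
          simp [ha', hb', hi]
        have hE : Emat B a' b' x y = 1 := if_pos hcond
        rw [hE, mul_one]
        have e1 : (fun i => if i ∈ B then x i else x i) = x := funext fun i => ite_self _
        have e2 : (fun i => if i ∈ B then y i else x i) = y := by
          funext i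
          by_cases h : i ∈ B
          · rw [if_pos h]
          · rw [if_neg h]; exact hxy i h
        have := hM.2 x y x z₀
        rw [e1, e2] at this
        exact this
      · intro b hbR hbne
        have : Emat B a' b x y = 0 := by
          refine if_neg fun hc => hbne ?_
          funext i
          by_cases h : i ∈ B
          · simp only [hb', if_pos h]; exact ((hc.1 i h).2).symm
          · simp only [hb', if_neg h]
            exact (Finset.mem_filter.1 hbR).2 i h
        rw [this, mul_zero]
    · intro a haR hane
      refine Finset.sum_eq_zero fun b _ => ?_
      have : Emat B a b x y = 0 := by
        refine if_neg fun hc => hane ?_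
        funext i
        by_cases h : i ∈ B
        · simp only [ha', if_pos h]; exact ((hc.1 i h).1).symm
        · simp only [ha', if_neg h]
          exact (Finset.mem_filter.1 haR).2 i h
      rw [this, mul_zero]
  · push_neg at hxy
    obtain ⟨i, hi, hne⟩ := hxy
    rw [hM.1 x y ⟨i, hi, hne⟩]
    refine (Finset.sum_eq_zero fun a _ => Finset.sum_eq_zero fun b _ => ?_).symm
    have : Emat B a b x y = 0 := if_neg fun hc => hne (hc.2 i hi)
    rw [this, mul_zero]

/-- The key structural identity for `W_k` of a tensor product state. -/
lemma Wk_tens (ψ : (ι₁ → Fin d) → ℂ) (φ : (ι₂ → Fin d) → ℂ) (k : ℕ) :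
    Wk (tens ψ φ) k =
      ⨆ p ∈ {q : ℕ × ℕ | q.1 + q.2 ≤ k}, Submodule.map₂ tensL (Wk ψ p.1) (Wk φ p.2) := by
  classical
  apply le_antisymm
  · rw [Wk_eq_map, Vk, Submodule.map_span]
    refine Submodule.span_le.2 ?_
    rintro _ ⟨M, ⟨B, hB, hs⟩, rfl⟩
    by_cases hcfg : Nonempty (ι₁ ⊕ ι₂ → Fin d)
    · obtain ⟨z₀⟩ := hcfg
      rw [supported_decomp B M hs z₀, map_sum]
      refine Submodule.sum_mem _ fun a _ => ?_
      rw [map_sum]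
      refine Submodule.sum_mem _ fun b _ => ?_
      rw [_root_.map_smul]
      refine Submodule.smul_mem _ _ ?_
      rw [← kron_Emat B a b]
      have hk : (mvL (tens ψ φ))
          (kron (Emat B.toLeft (fun i => a (Sum.inl i)) (fun i => b (Sum.inl i)))
            (Emat B.toRight (fun i => a (Sum.inr i)) (fun i => b (Sum.inr i)))) =
          tens ((Emat B.toLeft (fun i => a (Sum.inl i)) (fun i => b (Sum.inl i))).mulVec ψ)
            ((Emat B.toRight (fun i => a (Sum.inr i)) (fun i => b (Sum.inr i))).mulVec φ) :=
        kron_mulVec _ _ ψ φ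
      rw [hk]
      have hm₁ : (Emat B.toLeft (fun i => a (Sum.inl i)) (fun i => b (Sum.inl i))).mulVec ψ ∈
          Wk ψ B.toLeft.card := by
        rw [Wk_eq_map]
        exact ⟨_, Submodule.subset_span ⟨B.toLeft, le_rfl, Emat_supported _ _ _⟩, rfl⟩
      have hm₂ : (Emat B.toRight (fun i => a (Sum.inr i)) (fun i => b (Sum.inr i))).mulVec φ ∈
          Wk φ B.toRight.card := by
        rw [Wk_eq_map]
        exact ⟨_, Submodule.subset_span ⟨B.toRight, le_rfl, Emat_supported _ _ _⟩, rfl⟩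
      have hmem : (B.toLeft.card, B.toRight.card) ∈ {q : ℕ × ℕ | q.1 + q.2 ≤ k} := by
        simp only [Set.mem_setOf_eq]
        rw [Finset.card_toLeft_add_card_toRight]
        exact hB
      exact Submodule.mem_iSup_of_mem (B.toLeft.card, B.toRight.card)
        (Submodule.mem_iSup_of_mem hmem (Submodule.apply_mem_map₂ tensL hm₁ hm₂))
    · have hempty : IsEmpty (ι₁ ⊕ ι₂ → Fin d) := not_nonempty_iff.mp hcfg
      have hM0 : M = 0 := by
        ext x y
        exact absurd ⟨x⟩ (not_nonempty_iff.2 hempty)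
      rw [hM0, map_zero]
      exact Submodule.zero_mem _
  · refine iSup₂_le fun p hp => ?_
    rw [Submodule.map₂_le]
    intro u hu w hw
    rw [Wk_eq_map] at hu hw
    obtain ⟨M₁, hM₁, rfl⟩ := hu
    obtain ⟨M₂, hM₂, rfl⟩ := hw
    rw [Wk_eq_map]
    refine ⟨kron M₁ M₂, Vk_mono hp (kron_mem_Vk hM₁ hM₂), ?_⟩
    exact kron_mulVec M₁ M₂ ψ φ

/-- Linear independence of products of linearly independent families. -/
lemma linearIndependent_tens {α β : Type*} [Fintype α] [Fintype β]
    {f : α → ((ι₁ → Fin d) → ℂ)} {g : β → ((ι₂ → Fin d) → ℂ)}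
    (hf : LinearIndependent ℂ f) (hg : LinearIndependent ℂ g) :
    LinearIndependent ℂ (fun p : α × β => tens (f p.1) (g p.2)) := by
  rw [Fintype.linearIndependent_iff]
  intro c hc p
  have heval : ∀ x y, ∑ a : α, ∑ b : β, c (a, b) * (f a x * g b y) = 0 := by
    intro x y
    have := congrFun hc (Sum.elim x y)
    simp only [Finset.sum_apply, Pi.smul_apply, smul_eq_mul, tens, Sum.elim_inl, Sum.elim_inr,
      Pi.zero_apply] at this
    rw [← this, Fintype.sum_prod_type]
  have key : ∀ (b : β) (x : ι₁ → Fin d), ∑ a : α, c (a, b) * f a x = 0 := by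
    intro b x
    have h2 : ∑ b' : β, (∑ a : α, c (a, b') * f a x) • g b' = 0 := by
      funext y
      rw [Finset.sum_apply]
      simp only [Pi.smul_apply, smul_eq_mul, Pi.zero_apply]
      have hswap : ∑ a : α, ∑ b : β, c (a, b) * (f a x * g b y)
          = ∑ b' : β, (∑ a : α, c (a, b') * f a x) * g b' y := by
        rw [Finset.sum_comm]
        refine Finset.sum_congr rfl fun b' _ => ?_
        rw [Finset.sum_mul]
        exact Finset.sum_congr rfl fun a _ => by ring
      rw [← hswap]
      exact heval x y
    exact Fintype.linearIndependent_iff.1 hg _ h2 b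
  have key2 : ∑ a : α, c (a, p.2) • f a = 0 := by
    funext x
    rw [Finset.sum_apply]
    simp only [Pi.smul_apply, smul_eq_mul, Pi.zero_apply]
    exact key p.2 x
  have := Fintype.linearIndependent_iff.1 hf _ key2 p.1
  simpa using this

/-- Existence of a basis adapted to a stabilizing filtration. -/
lemma exists_adapted {H : Type*} [AddCommGroup H] [Module ℂ H] [FiniteDimensional ℂ H]
    (W : ℕ → Submodule ℂ H) (hmono : Monotone W) (K : ℕ)
    (hstab : ∀ k, K ≤ k → W k = W K) :
    ∃ (t : Finset H) (deg : H → ℕ),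
      LinearIndependent ℂ (Subtype.val : {x : H // x ∈ (t : Set H)} → H) ∧
      (∀ x ∈ t, deg x ≤ K) ∧
      (∀ k : ℕ, W k = Submodule.span ℂ ((t.filter (fun x => deg x ≤ k)) : Set H)) := by
  classical
  have aux : ∀ K' : ℕ, ∃ (t : Finset H) (deg : H → ℕ),
      LinearIndependent ℂ (Subtype.val : {x : H // x ∈ (t : Set H)} → H) ∧
      (∀ x ∈ t, deg x ≤ K') ∧
      (∀ k ≤ K', W k = Submodule.span ℂ ((t.filter (fun x => deg x ≤ k)) : Set H)) ∧
      Submodule.span ℂ (t : Set H) = W K' := by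
    intro K'
    induction K' with
    | zero =>
      obtain ⟨b, hbsub, hbspan, hbli⟩ := exists_linearIndependent ℂ ((W 0 : Set H))
      have hbfin : b.Finite := hbli.setFinite
      refine ⟨hbfin.toFinset, fun _ => 0, ?_, fun x _ => le_rfl, ?_, ?_⟩
      · rw [Set.Finite.coe_toFinset]; exact hbli
      · intro k hk
        interval_cases k
        rw [Finset.filter_true_of_mem (fun x _ => Nat.zero_le 0)]
        rw [Set.Finite.coe_toFinset, hbspan, Submodule.span_coe_eq_restrictScalars]
        rfl
      · rw [Set.Finite.coe_toFinset, hbspan, Submodule.span_coe_eq_restrictScalars]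
        rfl
    | succ K' ih =>
      obtain ⟨t, deg, hli, hbd, hk, hsp⟩ := ih
      have hsub : (t : Set H) ⊆ (W (K' + 1) : Set H) := by
        intro x hx
        have : x ∈ Submodule.span ℂ (t : Set H) := Submodule.subset_span hx
        rw [hsp] at this
        exact hmono (Nat.le_succ K') this
      obtain ⟨b, hbW, htb, hWspan, (hbli : LinearIndependent ℂ (Subtype.val : b → H))⟩ :=
        exists_linearIndepOn_id_extension hli hsub
      have hbfin : b.Finite := hbli.setFinite
      set t' : Finset H := hbfin.toFinset with ht'
      have hct' : (t' : Set H) = b := Set.Finite.coe_toFinset _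
      have hspan' : Submodule.span ℂ (t' : Set H) = W (K' + 1) := by
        rw [hct']
        refine le_antisymm (Submodule.span_le.2 hbW) ?_
        intro x hx
        exact hWspan hx
      refine ⟨t', fun x => if x ∈ t then deg x else K' + 1, ?_, ?_, ?_, hspan'⟩
      · rw [hct']; exact hbli
      · intro x _
        by_cases h : x ∈ t
        · simp only [if_pos h]; exact (hbd x h).trans (Nat.le_succ K')
        · simp [if_neg h]
      · intro k hkk
        by_cases hkK : k ≤ K'
        · have hfilter : t'.filter (fun x => (if x ∈ t then deg x else K' + 1) ≤ k) =
              t.filter (fun x => deg x ≤ k) := by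
            ext x
            simp only [Finset.mem_filter]
            constructor
            · rintro ⟨hx, hd⟩
              by_cases h : x ∈ t
              · simp only [if_pos h] at hd; exact ⟨h, hd⟩
              · simp only [if_neg h] at hd; omega
            · rintro ⟨hx, hd⟩
              have hx' : x ∈ t' := by
                rw [← Finset.mem_coe, hct']
                exact htb hx
              simp only [if_pos hx]
              exact ⟨hx', hd⟩
          rw [hfilter]
          exact hk k hkK
        · have hkeq : k = K' + 1 := by omega
          subst hkeq
          have hfilter : t'.filter (fun x => (if x ∈ t then deg x else K' + 1) ≤ K' + 1) = t' := by
            refine Finset.filter_true_of_mem fun x hx => ?_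
            by_cases h : x ∈ t
            · simp only [if_pos h]; exact (hbd x h).trans (Nat.le_succ K')
            · simp [if_neg h]
          rw [hfilter, hspan']
  obtain ⟨t, deg, hli, hbd, hk, hsp⟩ := aux K
  refine ⟨t, deg, hli, hbd, fun k => ?_⟩
  by_cases hkK : k ≤ K
  · exact hk k hkK
  · have h1 : W k = W K := hstab k (by omega)
    have h2 : t.filter (fun x => deg x ≤ k) = t :=
      Finset.filter_true_of_mem fun x hx => (hbd x hx).trans (by omega)
    have h3 : t.filter (fun x => deg x ≤ K) = t :=
      Finset.filter_true_of_mem fun x hx => hbd x hx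
    rw [h1, hk K le_rfl, h3, h2]

/-- Counting the rank of the span of part of an independent family. -/
lemma finrank_span_filter {H : Type*} [AddCommGroup H] [Module ℂ H] {α : Type*} [Fintype α]
    [DecidableEq α] (v : α → H) (hv : LinearIndependent ℂ v) (s : Set α)
    [DecidablePred (· ∈ s)] :
    Module.finrank ℂ (Submodule.span ℂ (v '' s)) =
      (Finset.univ.filter (fun i => i ∈ s)).card := by
  rw [Set.image_eq_range v s]
  have h := finrank_span_eq_card (R := ℂ) (hv.comp (Subtype.val : s → α) Subtype.val_injective)
  rw [show (Set.range fun x : s => v ↑x) = Set.range (v ∘ (Subtype.val : s → α)) from rfl, h,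
    Fintype.card_subtype]

lemma count_delta {α : Type*} [Fintype α] (dfun : α → ℕ) (k : ℕ) :
    ((Finset.univ.filter (fun i => dfun i ≤ k)).card : ℤ) -
      (if k = 0 then 0 else ((Finset.univ.filter (fun i => dfun i ≤ k - 1)).card : ℤ)) =
    ((Finset.univ.filter (fun i => dfun i = k)).card : ℤ) := by
  classical
  rcases Nat.eq_zero_or_pos k with hk | hk
  · subst hk
    rw [if_pos rfl, sub_zero]
    congr 2
    exact Finset.filter_congr fun i _ => by omega
  · obtain ⟨m, rfl⟩ := Nat.exists_eq_add_of_le hk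
    have h1 : (Finset.univ.filter (fun i => dfun i ≤ 1 + m)) =
        Finset.univ.filter (fun i => dfun i ≤ m) ∪
          Finset.univ.filter (fun i => dfun i = 1 + m) := by
      rw [← Finset.filter_or]
      exact Finset.filter_congr fun i _ => by constructor <;> intro <;> omega
    have hdisj : Disjoint (Finset.univ.filter (fun i => dfun i ≤ m))
        (Finset.univ.filter (fun i => dfun i = 1 + m)) := by
      rw [Finset.disjoint_left]
      intro i hi hi'
      simp only [Finset.mem_filter] at hi hi'
      omega
    rw [if_neg (by omega), h1, Finset.card_union_of_disjoint hdisj]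
    have : (1 + m) - 1 = m := by omega
    rw [this]
    push_cast
    ring

lemma count_conv {α β : Type*} [Fintype α] [Fintype β] (f : α → ℕ) (g : β → ℕ) (k : ℕ) :
    ((Finset.univ.filter (fun p : α × β => f p.1 + g p.2 = k)).card : ℤ) =
      ∑ l ∈ Finset.range (k + 1),
        ((Finset.univ.filter (fun i => f i = l)).card : ℤ) *
          ((Finset.univ.filter (fun j => g j = k - l)).card : ℤ) := by
  classical
  have hset : Finset.univ.filter (fun p : α × β => f p.1 + g p.2 = k) =
      (Finset.range (k + 1)).biUnion (fun l =>
        (Finset.univ.filter (fun i => f i = l)) ×ˢ (Finset.univ.filter (fun j => g j = k - l))) := by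
    ext p
    simp only [Finset.mem_filter, Finset.mem_univ, true_and, Finset.mem_biUnion,
      Finset.mem_range, Finset.mem_product]
    constructor
    · intro h
      exact ⟨f p.1, by omega, rfl, by omega⟩
    · rintro ⟨l, hl, h1, h2⟩
      omega
  have hdisj : ∀ l ∈ Finset.range (k + 1), ∀ l' ∈ Finset.range (k + 1), l ≠ l' →
      Disjoint ((Finset.univ.filter (fun i => f i = l)) ×ˢ
          (Finset.univ.filter (fun j => g j = k - l)))
        ((Finset.univ.filter (fun i => f i = l')) ×ˢ
          (Finset.univ.filter (fun j => g j = k - l'))) := by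
    intro l _ l' _ hne
    rw [Finset.disjoint_left]
    intro p hp hp'
    simp only [Finset.mem_product, Finset.mem_filter, Finset.mem_univ, true_and] at hp hp'
    exact hne (hp.1 ▸ hp'.1)
  rw [hset, Finset.card_biUnion hdisj]
  push_cast
  exact Finset.sum_congr rfl fun l _ => by rw [Finset.card_product]; push_cast; ring

end AuxDev

open Matrix in
/-- For pure states `ψ`, `φ` of two disjoint sets of qudits,
`dim ΔW_k^{ψ⊗φ} = Σ_{l+m=k} (dim ΔW_l^ψ)(dim ΔW_m^φ)`; equivalently the entanglement
polynomial is multiplicative: `f(ψ⊗φ) = f(ψ)·f(φ)`. -/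
theorem entPoly_tens_mul {ι₁ ι₂ : Type} [Fintype ι₁] [Fintype ι₂]
    [DecidableEq ι₁] [DecidableEq ι₂] {d : ℕ}
    (ψ : (ι₁ → Fin d) → ℂ) (φ : (ι₂ → Fin d) → ℂ) (hψ : ψ ≠ 0) (hφ : φ ≠ 0) :
    (∀ k : ℕ, deltaDimW (tens ψ φ) k =
        ∑ l ∈ Finset.range (k + 1), deltaDimW ψ l * deltaDimW φ (k - l)) ∧
      entPoly (tens ψ φ) = entPoly ψ * entPoly φ := by
  classical
  -- adapted bases for ψ and φ
  obtain ⟨t₁, deg₁, hli₁, hbd₁, hsp₁⟩ := exists_adapted (Wk ψ) (Wk_mono ψ)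
    (Fintype.card ι₁) (fun k hk => Wk_stab ψ hk)
  obtain ⟨t₂, deg₂, hli₂, hbd₂, hsp₂⟩ := exists_adapted (Wk φ) (Wk_mono φ)
    (Fintype.card ι₂) (fun k hk => Wk_stab φ hk)
  -- convert to families
  set n₁ := t₁.card with hn₁
  set n₂ := t₂.card with hn₂
  set e₁ : Fin n₁ ≃ {x // x ∈ t₁} := t₁.equivFin.symm with he₁
  set e₂ : Fin n₂ ≃ {x // x ∈ t₂} := t₂.equivFin.symm with he₂
  set v₁ : Fin n₁ → ((ι₁ → Fin d) → ℂ) := fun i => (e₁ i : (ι₁ → Fin d) → ℂ) with hv₁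
  set v₂ : Fin n₂ → ((ι₂ → Fin d) → ℂ) := fun j => (e₂ j : (ι₂ → Fin d) → ℂ) with hv₂
  set d₁ : Fin n₁ → ℕ := fun i => deg₁ (v₁ i) with hd₁
  set d₂ : Fin n₂ → ℕ := fun j => deg₂ (v₂ j) with hd₂
  have hliv₁ : LinearIndependent ℂ v₁ := hli₁.comp e₁ e₁.injective
  have hliv₂ : LinearIndependent ℂ v₂ := hli₂.comp e₂ e₂.injective
  have himg₁ : ∀ l : ℕ, ((t₁.filter (fun x => deg₁ x ≤ l)) : Set ((ι₁ → Fin d) → ℂ)) =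
      v₁ '' {i | d₁ i ≤ l} := by
    intro l
    ext u
    simp only [Finset.coe_filter, Set.mem_setOf_eq, Set.mem_image, Finset.mem_coe]
    constructor
    · rintro ⟨hu, hd⟩
      refine ⟨e₁.symm ⟨u, hu⟩, ?_, ?_⟩
      · show deg₁ (v₁ _) ≤ l
        rw [hv₁]
        simp only [Equiv.apply_symm_apply]
        exact hd
      · rw [hv₁]; simp
    · rintro ⟨i, hi, rfl⟩
      exact ⟨(e₁ i).2, hi⟩
  have himg₂ : ∀ m : ℕ, ((t₂.filter (fun x => deg₂ x ≤ m)) : Set ((ι₂ → Fin d) → ℂ)) =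
      v₂ '' {j | d₂ j ≤ m} := by
    intro m
    ext u
    simp only [Finset.coe_filter, Set.mem_setOf_eq, Set.mem_image, Finset.mem_coe]
    constructor
    · rintro ⟨hu, hd⟩
      refine ⟨e₂.symm ⟨u, hu⟩, ?_, ?_⟩
      · show deg₂ (v₂ _) ≤ m
        rw [hv₂]
        simp only [Equiv.apply_symm_apply]
        exact hd
      · rw [hv₂]; simp
    · rintro ⟨j, hj, rfl⟩
      exact ⟨(e₂ j).2, hj⟩
  have hspan₁ : ∀ l : ℕ, Wk ψ l = Submodule.span ℂ (v₁ '' {i | d₁ i ≤ l}) := by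
    intro l; rw [hsp₁ l, himg₁ l]
  have hspan₂ : ∀ m : ℕ, Wk φ m = Submodule.span ℂ (v₂ '' {j | d₂ j ≤ m}) := by
    intro m; rw [hsp₂ m, himg₂ m]
  -- the product family
  set w : Fin n₁ × Fin n₂ → ((ι₁ ⊕ ι₂ → Fin d) → ℂ) :=
    fun p => tens (v₁ p.1) (v₂ p.2) with hw
  have hliw : LinearIndependent ℂ w := linearIndependent_tens hliv₁ hliv₂
  -- span identity for the tensor state
  have hWtens : ∀ k : ℕ, Wk (tens ψ φ) k =
      Submodule.span ℂ (w '' {p | d₁ p.1 + d₂ p.2 ≤ k}) := by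
    intro k
    rw [Wk_tens]
    have hmap : ∀ p : ℕ × ℕ, Submodule.map₂ tensL (Wk ψ p.1) (Wk φ p.2) =
        Submodule.span ℂ (Set.image2 tens (v₁ '' {i | d₁ i ≤ p.1}) (v₂ '' {j | d₂ j ≤ p.2})) := by
      intro p
      rw [hspan₁ p.1, hspan₂ p.2, Submodule.map₂_span_span]
      rfl
    simp_rw [hmap]
    rw [← Submodule.span_iUnion₂]
    congr 1
    ext x
    simp only [Set.mem_iUnion, Set.mem_image2, Set.mem_image, Set.mem_setOf_eq]
    constructor
    · rintro ⟨p, hp, u, ⟨i, hi, rfl⟩, u', ⟨j, hj, rfl⟩, rfl⟩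
      refine ⟨(i, j), ?_, rfl⟩
      show d₁ i + d₂ j ≤ k
      omega
    · rintro ⟨⟨i, j⟩, hij, rfl⟩
      exact ⟨(d₁ i, d₂ j), hij, v₁ i, ⟨i, le_rfl, rfl⟩, v₂ j, ⟨j, le_rfl, rfl⟩, rfl⟩
  -- dimension formulas
  have hdim₁ : ∀ l : ℕ, (dimW ψ l : ℤ) =
      ((Finset.univ.filter (fun i : Fin n₁ => d₁ i ≤ l)).card : ℤ) := by
    intro l
    rw [dimW, hspan₁ l, finrank_span_filter v₁ hliv₁ {i | d₁ i ≤ l}]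
    norm_num
  have hdim₂ : ∀ m : ℕ, (dimW φ m : ℤ) =
      ((Finset.univ.filter (fun j : Fin n₂ => d₂ j ≤ m)).card : ℤ) := by
    intro m
    rw [dimW, hspan₂ m, finrank_span_filter v₂ hliv₂ {j | d₂ j ≤ m}]
    norm_num
  have hdimT : ∀ k : ℕ, (dimW (tens ψ φ) k : ℤ) =
      ((Finset.univ.filter (fun p : Fin n₁ × Fin n₂ => d₁ p.1 + d₂ p.2 ≤ k)).card : ℤ) := by
    intro k
    rw [dimW, hWtens k, finrank_span_filter w hliw {p | d₁ p.1 + d₂ p.2 ≤ k}]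
    norm_num
  -- delta dimension formulas
  have hΔ₁ : ∀ l : ℕ, deltaDimW ψ l =
      ((Finset.univ.filter (fun i : Fin n₁ => d₁ i = l)).card : ℤ) := by
    intro l
    rw [deltaDimW, hdim₁ l, ← count_delta d₁ l]
    congr 1
    split
    · rfl
    · rw [hdim₁]
  have hΔ₂ : ∀ m : ℕ, deltaDimW φ m =
      ((Finset.univ.filter (fun j : Fin n₂ => d₂ j = m)).card : ℤ) := by
    intro m
    rw [deltaDimW, hdim₂ m, ← count_delta d₂ m]
    congr 1
    split
    · rfl
    · rw [hdim₂]
  have hΔT : ∀ k : ℕ, deltaDimW (tens ψ φ) k =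
      ((Finset.univ.filter (fun p : Fin n₁ × Fin n₂ => d₁ p.1 + d₂ p.2 = k)).card : ℤ) := by
    intro k
    rw [deltaDimW, hdimT k, ← count_delta (fun p : Fin n₁ × Fin n₂ => d₁ p.1 + d₂ p.2) k]
    congr 1
    split
    · rfl
    · rw [hdimT]
  -- Part 1
  have part1 : ∀ k : ℕ, deltaDimW (tens ψ φ) k =
      ∑ l ∈ Finset.range (k + 1), deltaDimW ψ l * deltaDimW φ (k - l) := by
    intro k
    rw [hΔT k, count_conv d₁ d₂ k]
    exact Finset.sum_congr rfl fun l _ => by rw [hΔ₁ l, hΔ₂ (k - l)]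
  refine ⟨part1, ?_⟩
  -- Part 2: polynomials
  have coeff_eq : ∀ {ι : Type} [Fintype ι] [DecidableEq ι] (χ : (ι → Fin d) → ℂ) (n : ℕ),
      (entPoly χ).coeff n = deltaDimW χ n := by
    intro ι _ _ χ n
    rw [entPoly, Polynomial.finset_sum_coeff]
    simp_rw [Polynomial.C_mul_X_pow_eq_monomial, Polynomial.coeff_monomial]
    rw [Finset.sum_ite_eq' (Finset.range (Fintype.card ι + 1)) n (fun k => deltaDimW χ k)]
    split
    · rfl
    · rename_i hn
      rw [Finset.mem_range] at hn
      exact (deltaDimW_eq_zero χ (by omega)).symm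
  ext n
  rw [Polynomial.coeff_mul, coeff_eq (tens ψ φ) n, part1 n,
    Finset.Nat.sum_antidiagonal_eq_sum_range_succ
      (fun i j => (entPoly ψ).coeff i * (entPoly φ).coeff j)]
  exact Finset.sum_congr rfl fun l _ => by rw [coeff_eq ψ l, coeff_eq φ (n - l)]
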